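/- Let K ∈ ℕ and let u0 be a half-integral timed word which is small w.r.t. K. For every timed word u there exists a half-integral timed word w such that the concatenation u0w is small w.r.t. K and every K-acceptor reaches the same control state on reading u0u as on reading u0w from its initial configuration. -/

import Mathlib

open scoped NNReal Classical

namespace IRTA

/-- A timestamp is a finite sequence of non-negative reals. -/
abbrev Timestamp : Type := List ℝ≥0

/-- A timed word is a finite sequence of (delay, letter) pairs. -/
abbrev TimedWord (A : Type) : Type := List (ℝ≥0 × A)

/-- Fractional part of a non-negative real. -/
noncomputable def fracPart (x : ℝ≥0) : ℝ≥0 := x - (⌊x⌋₊ : ℝ≥0)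

/-- `x` is a natural-number value. -/
def IsNatVal (x : ℝ≥0) : Prop := ∃ m : ℕ, x = (m : ℝ≥0)

/-- Region equivalence `≡^K`. -/
def RegEq (K : ℕ) (x y : ℝ≥0) : Prop :=
  (⌊x⌋₊ = ⌊y⌋₊ ∧ (fracPart x = 0 ↔ fracPart y = 0)) ∨ ((K : ℝ≥0) < x ∧ (K : ℝ≥0) < y)

/-- One step of the (greedy) clock evolution: reset whenever the value is an
integer between `0` and `K`. -/
noncomputable def resetStep (K : ℕ) (v : ℝ≥0) : ℝ≥0 :=
  if ∃ m : ℕ, m ≤ K ∧ v = (m : ℝ≥0) then 0 else v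

/-- Auxiliary function computing `c^K` with accumulator `v`. -/
noncomputable def cKAux (K : ℕ) : ℝ≥0 → Timestamp → ℝ≥0
  | v, [] => v
  | v, t :: d => cKAux K (resetStep K (v + t)) d

/-- `c^K(d)`: the sum of the delays after the last integral position of `d`. -/
noncomputable def cK (K : ℕ) (d : Timestamp) : ℝ≥0 := cKAux K 0 d

/-- `c^K` of a timed word is `c^K` of its timestamp. -/
noncomputable def cKW {A : Type} (K : ℕ) (w : TimedWord A) : ℝ≥0 :=
  cK K (w.map Prod.fst)

/-- `c^K_⊤` : `c^K` truncated at `K`. -/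
noncomputable def cKTop {A : Type} (K : ℕ) (w : TimedWord A) : WithTop ℝ≥0 :=
  if cKW K w ≤ (K : ℝ≥0) then ((cKW K w : ℝ≥0) : WithTop ℝ≥0) else ⊤

/-! ### Clock constraints and one-clock timed automata -/

/-- Clock constraints `φ ::= x < m | m < x | x = m | φ ∧ φ`. -/
inductive CC : Type where
  | lt : ℕ → CC
  | gt : ℕ → CC
  | eq : ℕ → CC
  | and : CC → CC → CC

/-- Satisfaction of a clock constraint by a clock value. -/
def CC.sat : CC → ℝ≥0 → Prop
  | .lt m, x => x < (m : ℝ≥0)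
  | .gt m, x => (m : ℝ≥0) < x
  | .eq m, x => x = (m : ℝ≥0)
  | .and φ ψ, x => φ.sat x ∧ ψ.sat x

/-- The largest constant appearing in a clock constraint. -/
def CC.maxConst : CC → ℕ
  | .lt m => m
  | .gt m => m
  | .eq m => m
  | .and φ ψ => max φ.maxConst ψ.maxConst

/-- A transition of a one-clock timed automaton; `reset = true` means the
clock is reset (the `r = 0` case). -/
structure TTrans (Q A : Type) where
  src : Q
  dst : Q
  lab : A
  guard : CC
  reset : Bool

/-- A one-clock timed automaton. -/
structure TA (A : Type) where
  Q : Type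
  init : Q
  final : Set Q
  trans : Set (TTrans Q A)

/-- The automaton has finitely many states and transitions. -/
def TA.IsFinite {A : Type} (M : TA A) : Prop := Finite M.Q ∧ M.trans.Finite

/-- Runs of a one-clock timed automaton between configurations. -/
inductive Steps {A : Type} (M : TA A) : M.Q × ℝ≥0 → TimedWord A → M.Q × ℝ≥0 → Prop
  | nil (c : M.Q × ℝ≥0) : Steps M c [] c
  | cons {q : M.Q} {ν t : ℝ≥0} {a : A} {w : TimedWord A} {c : M.Q × ℝ≥0}
      (θ : TTrans M.Q A) (hθ : θ ∈ M.trans) (hsrc : θ.src = q) (hlab : θ.lab = a)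
      (hg : θ.guard.sat (ν + t))
      (hrest : Steps M (θ.dst, if θ.reset then 0 else ν + t) w c) :
      Steps M (q, ν) ((t, a) :: w) c

/-- The language of `M` from a given configuration. -/
def TA.LangFrom {A : Type} (M : TA A) (c : M.Q × ℝ≥0) : Set (TimedWord A) :=
  {w | ∃ q' : M.Q, ∃ ν' : ℝ≥0, Steps M c w (q', ν') ∧ q' ∈ M.final}

/-- The language of `M` (from the initial configuration). -/
def TA.Lang {A : Type} (M : TA A) : Set (TimedWord A) := M.LangFrom (M.init, 0)

/-- Determinism: distinct transitions with the same source and letter have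
disjoint guards. -/
def TA.Deterministic {A : Type} (M : TA A) : Prop :=
  ∀ θ₁ ∈ M.trans, ∀ θ₂ ∈ M.trans, θ₁ ≠ θ₂ → θ₁.src = θ₂.src → θ₁.lab = θ₂.lab →
    ∀ x : ℝ≥0, ¬ (θ₁.guard.sat x ∧ θ₂.guard.sat x)

/-- Completeness: every timed word admits a run from the initial configuration. -/
def TA.Complete {A : Type} (M : TA A) : Prop :=
  ∀ w : TimedWord A, ∃ c : M.Q × ℝ≥0, Steps M (M.init, 0) w c

/-- A 1-IRTA: every resetting transition has an equality guard. -/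
def TA.IsIRTA {A : Type} (M : TA A) : Prop :=
  ∀ θ ∈ M.trans, θ.reset = true → ∃ m : ℕ, θ.guard = CC.eq m

/-- Guards allowed in a strict 1-IRTA with constant `K`. -/
def StrictGuard (K : ℕ) (φ : CC) : Prop :=
  (∃ m : ℕ, φ = CC.eq m) ∨ (∃ m : ℕ, φ = CC.and (CC.gt m) (CC.lt (m + 1))) ∨ φ = CC.gt K

/-- Strictness with constant `K`: every guard is of one of the allowed forms
and a guard is an equality iff the transition resets. -/
def TA.IsStrict {A : Type} (M : TA A) (K : ℕ) : Prop :=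
  ∀ θ ∈ M.trans, StrictGuard K θ.guard ∧ ((∃ m : ℕ, θ.guard = CC.eq m) ↔ θ.reset = true)

/-- All constants appearing in guards are at most `K`. -/
def TA.MaxConstLE {A : Type} (M : TA A) (K : ℕ) : Prop :=
  ∀ θ ∈ M.trans, θ.guard.maxConst ≤ K

/-- `M` reaches the same control state on reading `u` and `v` from the initial
configuration. -/
def TA.SameState {A : Type} (M : TA A) (u v : TimedWord A) : Prop :=
  ∃ q : M.Q, ∃ ν ν' : ℝ≥0, Steps M (M.init, 0) u (q, ν) ∧ Steps M (M.init, 0) v (q, ν')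

/-- A `K`-acceptor. -/
def IsKAcceptor {A : Type} (M : TA A) (K : ℕ) : Prop :=
  M.IsFinite ∧ M.Complete ∧ M.Deterministic ∧ M.IsIRTA ∧ M.IsStrict K ∧ M.MaxConstLE K ∧
    ∀ u v : TimedWord A, M.SameState u v → RegEq K (cKW K u) (cKW K v)

/-! ### Equivalences on timed words -/

/-- `L`-preservation of a relation on timed words. -/
def LPreserving {A : Type} (L : Set (TimedWord A)) (r : TimedWord A → TimedWord A → Prop) :
    Prop :=
  ∀ u v : TimedWord A, r u v → (u ∈ L ↔ v ∈ L)

/-- `K`-monotonicity of a relation on timed words. -/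
def KMonotonic {A : Type} (K : ℕ) (r : TimedWord A → TimedWord A → Prop) : Prop :=
  ∀ u v : TimedWord A, r u v →
    RegEq K (cKW K u) (cKW K v) ∧
      ∀ (a : A) (t t' : ℝ≥0), RegEq K (cKW K u + t) (cKW K v + t') →
        r (u ++ [(t, a)]) (v ++ [(t', a)])

/-- Finite index: there are finitely many classes `{v | r u v}`. -/
def FiniteIndex {A : Type} (r : TimedWord A → TimedWord A → Prop) : Prop :=
  Set.Finite (Set.range fun u : TimedWord A => {v : TimedWord A | r u v})

/-! ### The rescaling maps -/

/-- The bijection `f_{λ→λ'}` of the open unit interval. -/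
noncomputable def fScale (lam lam' t : ℝ≥0) : ℝ≥0 :=
  if t ≤ lam then (lam' / lam) * t else lam' + ((1 - lam') / (1 - lam)) * (t - lam)

/-- The new delay `t'` computed from the current clock values `y, y'` and delay `t`. -/
noncomputable def tauStep (K : ℕ) (y y' t : ℝ≥0) : ℝ≥0 :=
  if (IsNatVal y ∧ IsNatVal y') ∨ ((K : ℝ≥0) < y ∧ (K : ℝ≥0) < y') then t
  else (⌊t⌋₊ : ℝ≥0) + fScale (1 - fracPart y) (1 - fracPart y') (fracPart t)

/-- Auxiliary rescaling map on timestamps, carrying the current clock values. -/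
noncomputable def tauAux (K : ℕ) : ℝ≥0 → ℝ≥0 → Timestamp → Timestamp
  | _, _, [] => []
  | y, y', t :: d =>
      tauStep K y y' t ::
        tauAux K (resetStep K (y + t)) (resetStep K (y' + tauStep K y y' t)) d

/-- The rescaling map `τ_{x→x'}` on timestamps. -/
noncomputable def tau (K : ℕ) (x x' : ℝ≥0) (d : Timestamp) : Timestamp :=
  tauAux K (resetStep K x) (resetStep K x') d

/-- Auxiliary rescaling map on timed words. -/
noncomputable def tauWAux {A : Type} (K : ℕ) : ℝ≥0 → ℝ≥0 → TimedWord A → TimedWord A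
  | _, _, [] => []
  | y, y', (t, a) :: w =>
      (tauStep K y y' t, a) ::
        tauWAux K (resetStep K (y + t)) (resetStep K (y' + tauStep K y y' t)) w

/-- The rescaling map `τ_{x→x'}` on timed words. -/
noncomputable def tauW {A : Type} (K : ℕ) (x x' : ℝ≥0) (w : TimedWord A) : TimedWord A :=
  tauWAux K (resetStep K x) (resetStep K x') w

/-! ### Residuals and the syntactic equivalence -/

/-- The residual language `u^{-1}L`. -/
def residual {A : Type} (L : Set (TimedWord A)) (u : TimedWord A) : Set (TimedWord A) :=
  {w : TimedWord A | u ++ w ∈ L}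

/-- The syntactic equivalence `≈^{L,K}`. -/
def ApproxLK {A : Type} (L : Set (TimedWord A)) (K : ℕ) (u v : TimedWord A) : Prop :=
  RegEq K (cKW K u) (cKW K v) ∧
    (tauW K (cKW K u) (cKW K v)) '' (residual L u) = residual L v

/-! ### The automaton built from a monotonic equivalence -/

/-- The region guard `φ([t])`. -/
noncomputable def phiOf (K : ℕ) (t : ℝ≥0) : CC :=
  if t ≤ (K : ℝ≥0) then
    (if IsNatVal t then CC.eq ⌊t⌋₊ else CC.and (CC.gt ⌊t⌋₊) (CC.lt (⌊t⌋₊ + 1)))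
  else CC.gt K

/-- The automaton `A_≈` built from an equivalence `s` on timed words. -/
noncomputable def Aapprox {A : Type} (L : Set (TimedWord A)) (K : ℕ)
    (s : Setoid (TimedWord A)) : TA A where
  Q := Quotient s
  init := Quotient.mk s ([] : TimedWord A)
  final := {q : Quotient s | ∃ u : TimedWord A, q = Quotient.mk s u ∧ u ∈ L}
  trans := {θ : TTrans (Quotient s) A |
    ∃ (u : TimedWord A) (a : A) (t : ℝ≥0),
      θ.src = Quotient.mk s u ∧ θ.dst = Quotient.mk s (u ++ [(t, a)]) ∧ θ.lab = a ∧
      θ.guard = phiOf K (cKW K u + t) ∧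
      (θ.reset = true ↔ ∃ m : ℕ, m ≤ K ∧ cKW K u + t = (m : ℝ≥0))}

/-! ### Half-integral and small words -/

/-- Every delay has fractional part `0` or `1/2`. -/
def HalfIntegral {A : Type} (w : TimedWord A) : Prop :=
  ∀ p ∈ w, fracPart p.1 = 0 ∨ fracPart p.1 = 1 / 2

/-- Every delay is `< K + 1`. -/
def SmallWord {A : Type} (K : ℕ) (w : TimedWord A) : Prop :=
  ∀ p ∈ w, p.1 < (K : ℝ≥0) + 1

/-- The delays of `Σ_K`: half-integral values `≤ K + 1/2`. -/
def IsSigmaK (K : ℕ) (t : ℝ≥0) : Prop :=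
  (fracPart t = 0 ∨ fracPart t = 1 / 2) ∧ t ≤ (K : ℝ≥0) + 1 / 2

/-- Words over `Σ_K` (small half-integral words). -/
def SigmaWord {A : Type} (K : ℕ) (w : TimedWord A) : Prop :=
  ∀ p ∈ w, IsSigmaK K p.1



/-! ### `K`-acceptors with their region representatives -/

/-- A `K`-acceptor bundled with the half-integral representative of the
unique region of each state. -/
structure KAcc (A : Type) (K : ℕ) where
  M : TA A
  acc : IsKAcceptor M K
  reg : M.Q → ℝ≥0
  regHalf : ∀ q : M.Q, fracPart (reg q) = 0 ∨ fracPart (reg q) = 1 / 2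
  regLe : ∀ q : M.Q, reg q ≤ (K : ℝ≥0) + 1 / 2
  regSpec : ∀ (w : TimedWord A) (q : M.Q) (x : ℝ≥0),
    Steps M (M.init, 0) w (q, x) → RegEq K x (reg q)

/-- The minimization equivalences `∼^i` on the states of a `K`-acceptor. -/
def simEq {A : Type} {K : ℕ} (B : KAcc A K) : ℕ → B.M.Q → B.M.Q → Prop
  | 0, p, q => B.reg p = B.reg q ∧ (p ∈ B.M.final ↔ q ∈ B.M.final)
  | i + 1, p, q => simEq B i p q ∧
      ∀ (t : ℝ≥0) (a : A), IsSigmaK K t →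
        ∀ θ₁ θ₂ : TTrans B.M.Q A, θ₁ ∈ B.M.trans → θ₂ ∈ B.M.trans →
          θ₁.src = p → θ₂.src = q → θ₁.lab = a → θ₂.lab = a →
          θ₁.guard = phiOf K t → θ₂.guard = phiOf K t →
          simEq B i θ₁.dst θ₂.dst

/-- The quotient automaton `B/∼^m`. -/
noncomputable def quotTA {A : Type} {K : ℕ} (B : KAcc A K) (m : ℕ) : TA A where
  Q := Quot (simEq B m)
  init := Quot.mk (simEq B m) B.M.init
  final := {c : Quot (simEq B m) | ∃ q ∈ B.M.final, c = Quot.mk (simEq B m) q}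
  trans := {θ : TTrans (Quot (simEq B m)) A |
    ∃ θ₀ ∈ B.M.trans,
      θ.src = Quot.mk (simEq B m) θ₀.src ∧ θ.dst = Quot.mk (simEq B m) θ₀.dst ∧
      θ.lab = θ₀.lab ∧ θ.guard = θ₀.guard ∧ θ.reset = θ₀.reset}

/-! ### Observation tables -/

/-- An observation table over `Σ_K`. -/
structure ObsTable (A : Type) (K : ℕ) where
  U1 : Set (TimedWord A)
  E : Set (TimedWord A)
  val : TimedWord A → TimedWord A → Bool
  U1fin : U1.Finite
  Efin : E.Finite
  U1sigma : ∀ u ∈ U1, SigmaWord K u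
  Esigma : ∀ e ∈ E, SigmaWord K e
  epsU1 : ([] : TimedWord A) ∈ U1
  prefixClosed : ∀ (u : TimedWord A) (x : ℝ≥0 × A), u ++ [x] ∈ U1 → u ∈ U1
  epsE : ([] : TimedWord A) ∈ E
  suffixClosed : ∀ (x : ℝ≥0 × A) (e : TimedWord A), x :: e ∈ E → e ∈ E

/-- The set `U2` of one-letter `Σ_K`-extensions of `U1`. -/
def obsU2 {A : Type} {K : ℕ} (T : ObsTable A K) : Set (TimedWord A) :=
  {w : TimedWord A | ∃ u ∈ T.U1, ∃ (t : ℝ≥0) (a : A), IsSigmaK K t ∧ w = u ++ [(t, a)]}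

/-- `R(u)`: the row of `u` (restricted to `E`) together with `c^K_⊤(u)`. -/
noncomputable def Rof {A : Type} {K : ℕ} (T : ObsTable A K) (u : TimedWord A) :
    ({e : TimedWord A // e ∈ T.E} → Bool) × WithTop ℝ≥0 :=
  (fun e => T.val u e.1, cKTop K u)

/-- The table is closed. -/
def ObsTable.Closed {A : Type} {K : ℕ} (T : ObsTable A K) : Prop :=
  ∀ w ∈ obsU2 T, ∃ u ∈ T.U1, Rof T w = Rof T u

/-- The table is consistent. -/
def ObsTable.Consistent {A : Type} {K : ℕ} (T : ObsTable A K) : Prop :=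
  ∀ u ∈ T.U1, ∀ w ∈ T.U1, Rof T u = Rof T w →
    ∀ (t : ℝ≥0) (a : A), IsSigmaK K t → Rof T (u ++ [(t, a)]) = Rof T (w ++ [(t, a)])

/-- The automaton `A_𝒯` induced by a (closed and consistent) observation table. -/
noncomputable def ATable {A : Type} {K : ℕ} (T : ObsTable A K) : TA A where
  Q := {f : ({e : TimedWord A // e ∈ T.E} → Bool) × WithTop ℝ≥0 // ∃ u ∈ T.U1, f = Rof T u}
  init := ⟨Rof T [], ⟨[], T.epsU1, rfl⟩⟩
  final := {q | ∃ u ∈ T.U1, q.1 = Rof T u ∧ T.val u [] = true}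
  trans := {θ | ∃ u ∈ T.U1, ∃ (t : ℝ≥0) (a : A), IsSigmaK K t ∧
      θ.src.1 = Rof T u ∧ θ.dst.1 = Rof T (u ++ [(t, a)]) ∧ θ.lab = a ∧
      θ.guard = phiOf K (cKW K u + t) ∧
      (θ.reset = true ↔ ∃ m : ℕ, m ≤ K ∧ cKW K u + t = (m : ℝ≥0))}

/-- A `K`-acceptor is consistent with the observation table `𝒯`. -/
def ConsistentWith {A : Type} {K : ℕ} (M : TA A) (T : ObsTable A K) : Prop :=
  ∀ w : TimedWord A, (w ∈ T.U1 ∨ w ∈ obsU2 T) → ∀ e ∈ T.E,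
    ∀ (q : M.Q) (ν : ℝ≥0), Steps M (M.init, 0) (w ++ e) (q, ν) →
      (q ∈ M.final ↔ T.val w e = true)

/-- Isomorphism of one-clock timed automata. -/
structure TAIso {A : Type} (M N : TA A) where
  toEquiv : M.Q ≃ N.Q
  init_eq : toEquiv M.init = N.init
  final_iff : ∀ q : M.Q, q ∈ M.final ↔ toEquiv q ∈ N.final
  trans_iff : ∀ θ : TTrans M.Q A,
    θ ∈ M.trans ↔
      (⟨toEquiv θ.src, toEquiv θ.dst, θ.lab, θ.guard, θ.reset⟩ : TTrans N.Q A) ∈ N.trans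


/-! ### Auxiliary machinery for Statement 14 -/

/-- Half-integral values: `2x` is a natural number. -/
def HI (x : ℝ≥0) : Prop := ∃ n : ℕ, 2 * x = (n : ℝ≥0)

lemma half_lt_one : (1/2 : ℝ≥0) < 1 := by
  rw [← NNReal.coe_lt_coe]; norm_num

lemma two_mul_half : (2 : ℝ≥0) * (1/2) = 1 := by
  rw [← NNReal.coe_inj]; push_cast; norm_num

lemma floor_add_fracPart (x : ℝ≥0) : (⌊x⌋₊ : ℝ≥0) + fracPart x = x :=
  add_tsub_cancel_of_le (Nat.floor_le zero_le)

lemma fracPart_eq_zero_iff {x : ℝ≥0} : fracPart x = 0 ↔ x = (⌊x⌋₊ : ℝ≥0) := by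
  unfold fracPart
  rw [tsub_eq_zero_iff_le]
  exact ⟨fun h => le_antisymm h (Nat.floor_le zero_le), fun h => h.le⟩

lemma floor_lt_of_frac_ne {x : ℝ≥0} (h : fracPart x ≠ 0) : (⌊x⌋₊ : ℝ≥0) < x :=
  lt_of_le_of_ne (Nat.floor_le zero_le) (fun he => h (fracPart_eq_zero_iff.2 he.symm))

lemma fracPart_natCast (n : ℕ) : fracPart ((n : ℝ≥0)) = 0 := by
  rw [fracPart_eq_zero_iff, Nat.floor_natCast]

lemma floor_add_half (q : ℕ) : ⌊(q : ℝ≥0) + 1/2⌋₊ = q := by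
  rw [Nat.floor_eq_iff zero_le]
  constructor
  · exact le_self_add
  · calc (q : ℝ≥0) + 1/2 < (q : ℝ≥0) + 1 := by exact add_lt_add_right half_lt_one _
      _ = _ := rfl

lemma fracPart_add_half (q : ℕ) : fracPart ((q : ℝ≥0) + 1/2) = 1/2 := by
  unfold fracPart
  rw [floor_add_half, add_tsub_cancel_left]

lemma HI_iff {x : ℝ≥0} : HI x ↔ (fracPart x = 0 ∨ fracPart x = 1/2) := by
  constructor
  · rintro ⟨n, hn⟩
    rcases Nat.even_or_odd n with ⟨q, hq⟩ | ⟨q, hq⟩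
    · left
      have hx : x = (q : ℝ≥0) := by
        refine mul_left_cancel₀ (two_ne_zero) ?_
        rw [hn, hq]; push_cast; ring
      rw [hx]; exact fracPart_natCast q
    · right
      have hx : x = (q : ℝ≥0) + 1/2 := by
        refine mul_left_cancel₀ (two_ne_zero) ?_
        rw [hn, hq, mul_add, two_mul_half]
        push_cast
        ring
      rw [hx, fracPart_add_half]
  · rintro (h | h)
    · obtain ⟨q, hq⟩ : ∃ q : ℕ, x = (q : ℝ≥0) := ⟨⌊x⌋₊, fracPart_eq_zero_iff.1 h⟩
      exact ⟨2 * q, by rw [hq]; push_cast; ring⟩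
    · obtain ⟨q, hq⟩ : ∃ q : ℕ, x = (q : ℝ≥0) + 1/2 :=
        ⟨⌊x⌋₊, by rw [← h, floor_add_fracPart]⟩
      refine ⟨2 * q + 1, ?_⟩
      rw [hq, mul_add, two_mul_half]
      push_cast
      ring

lemma HI_zero : HI 0 := ⟨0, by simp⟩

lemma HI_add {x y : ℝ≥0} (hx : HI x) (hy : HI y) : HI (x + y) := by
  obtain ⟨n, hn⟩ := hx; obtain ⟨m, hm⟩ := hy
  exact ⟨n + m, by rw [mul_add, hn, hm]; push_cast; ring⟩

lemma HI_tsub {x y : ℝ≥0} (hx : HI x) (hy : HI y) : HI (x - y) := by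
  obtain ⟨n, hn⟩ := hx; obtain ⟨m, hm⟩ := hy
  rcases le_total x y with h | h
  · rw [tsub_eq_zero_of_le h]; exact HI_zero
  · refine ⟨n - m, ?_⟩
    have hmn : m ≤ n := by
      have h2 : (m : ℝ≥0) ≤ (n : ℝ≥0) := by
        rw [← hn, ← hm]; exact mul_le_mul_right h 2
      exact_mod_cast h2
    have h2 : 2 * (x - y) + 2 * y = 2 * x := by
      rw [← mul_add, tsub_add_cancel_of_le h]
    rw [hm, hn] at h2
    have h4 : ((n - m : ℕ) : ℝ≥0) + (m : ℝ≥0) = (n : ℝ≥0) := by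
      exact_mod_cast congrArg (Nat.cast : ℕ → ℝ≥0) (Nat.sub_add_cancel hmn)
    exact add_right_cancel (h2.trans h4.symm)

lemma HI_natCast (n : ℕ) : HI (n : ℝ≥0) := ⟨2 * n, by push_cast; ring⟩

lemma HI_half : HI (1/2 : ℝ≥0) := ⟨1, by norm_num⟩

/-- The canonical half-integral representative of the region of `v`. -/
noncomputable def rep (K : ℕ) (v : ℝ≥0) : ℝ≥0 :=
  if v ≤ (K : ℝ≥0) then (⌊v⌋₊ : ℝ≥0) + (if fracPart v = 0 then 0 else 1/2)
  else (K : ℝ≥0) + 1/2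

lemma HI_rep (K : ℕ) (v : ℝ≥0) : HI (rep K v) := by
  unfold rep
  split_ifs
  · rw [add_zero]; exact HI_natCast _
  · exact HI_add (HI_natCast _) HI_half
  · exact HI_add (HI_natCast _) HI_half

lemma rep_le (K : ℕ) (v : ℝ≥0) : rep K v ≤ (K : ℝ≥0) + 1/2 := by
  unfold rep
  split_ifs with h1 h2
  · have hfl : (⌊v⌋₊ : ℝ≥0) ≤ (K : ℝ≥0) := by
      have : ⌊v⌋₊ ≤ K := by
        have := Nat.floor_mono h1
        rwa [Nat.floor_natCast] at this
      exact_mod_cast this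
    rw [add_zero]
    exact le_trans hfl le_self_add
  · have hfl : (⌊v⌋₊ : ℝ≥0) ≤ (K : ℝ≥0) := by
      have : ⌊v⌋₊ ≤ K := by
        have := Nat.floor_mono h1
        rwa [Nat.floor_natCast] at this
      exact_mod_cast this
    exact add_le_add_left hfl _
  · exact le_refl _

lemma regEq_refl (K : ℕ) (x : ℝ≥0) : RegEq K x x := Or.inl ⟨rfl, Iff.rfl⟩

lemma regEq_symm {K : ℕ} {x y : ℝ≥0} (h : RegEq K x y) : RegEq K y x := by
  rcases h with ⟨h1, h2⟩ | ⟨h1, h2⟩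
  · exact Or.inl ⟨h1.symm, h2.symm⟩
  · exact Or.inr ⟨h2, h1⟩

lemma regEq_natval {K : ℕ} {x y : ℝ≥0} {m : ℕ} (h : RegEq K x y) (hm : m ≤ K)
    (hx : x = (m : ℝ≥0)) : y = (m : ℝ≥0) := by
  rcases h with ⟨hfl, hfr⟩ | ⟨h1, _⟩
  · have h0 : fracPart x = 0 := by rw [hx]; exact fracPart_natCast m
    have h0y : fracPart y = 0 := hfr.1 h0
    have hy : ⌊y⌋₊ = m := by rw [← hfl, hx, Nat.floor_natCast]
    rw [fracPart_eq_zero_iff.1 h0y, hy]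
  · exfalso
    rw [hx] at h1
    exact absurd h1 (not_lt.2 (by exact_mod_cast hm))

lemma rep_regEq (K : ℕ) (v : ℝ≥0) : RegEq K v (rep K v) := by
  unfold rep
  split_ifs with h1 h2
  · rw [add_zero, ← fracPart_eq_zero_iff.1 h2]
    exact regEq_refl K v
  · left
    constructor
    · rw [floor_add_half]
    · rw [fracPart_add_half]
      exact iff_of_false h2 (by norm_num)
  · exact Or.inr ⟨lt_of_not_ge h1, lt_add_of_pos_right _ (by norm_num)⟩

lemma eq_rep_of {K : ℕ} {ν ν' : ℝ≥0} (h : RegEq K ν ν') (hH : HI ν') (hν : ν ≤ (K : ℝ≥0)) :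
    ν' = rep K ν := by
  rcases h with ⟨hfl, hfr⟩ | ⟨h1, _⟩
  · unfold rep
    rw [if_pos hν]
    by_cases h0 : fracPart ν = 0
    · rw [if_pos h0, add_zero]
      have h0' : fracPart ν' = 0 := hfr.1 h0
      rw [fracPart_eq_zero_iff.1 h0', ← hfl]
    · rw [if_neg h0]
      have h0' : fracPart ν' ≠ 0 := fun hc => h0 (hfr.2 hc)
      have hhalf : fracPart ν' = 1/2 := (HI_iff.1 hH).resolve_left h0'
      calc ν' = (⌊ν'⌋₊ : ℝ≥0) + fracPart ν' := (floor_add_fracPart ν').symm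
        _ = (⌊ν⌋₊ : ℝ≥0) + 1/2 := by rw [hhalf, hfl]
  · exact absurd (lt_of_lt_of_le h1 hν) (lt_irrefl _)

lemma rep_mono {K : ℕ} {v w : ℝ≥0} (hvw : v ≤ w) (hw : w ≤ (K : ℝ≥0)) :
    rep K v ≤ rep K w := by
  have hv : v ≤ (K : ℝ≥0) := hvw.trans hw
  unfold rep
  rw [if_pos hv, if_pos hw]
  have hfl : ⌊v⌋₊ ≤ ⌊w⌋₊ := Nat.floor_mono hvw
  rcases lt_or_eq_of_le hfl with hlt | heq
  · have h1 : (⌊v⌋₊ : ℝ≥0) + 1 ≤ (⌊w⌋₊ : ℝ≥0) := by exact_mod_cast hlt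
    have h2 : (if fracPart v = 0 then (0:ℝ≥0) else 1/2) ≤ 1 := by
      split_ifs <;> norm_num
    calc (⌊v⌋₊ : ℝ≥0) + _ ≤ (⌊v⌋₊ : ℝ≥0) + 1 := add_le_add_right h2 _
      _ ≤ (⌊w⌋₊ : ℝ≥0) := h1
      _ ≤ _ := le_self_add
  · rw [heq]
    apply add_le_add_right
    by_cases hv0 : fracPart v = 0
    · rw [if_pos hv0]; exact zero_le
    · have hw0 : fracPart w ≠ 0 := by
        intro hc
        have hweq : w = (⌊w⌋₊ : ℝ≥0) := fracPart_eq_zero_iff.1 hc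
        have : (⌊v⌋₊ : ℝ≥0) < v := floor_lt_of_frac_ne hv0
        rw [heq] at this
        exact absurd (hvw.trans hweq.le) (not_le.2 this)
      rw [if_neg hv0, if_neg hw0]

lemma step_key {K : ℕ} {ν ν' t : ℝ≥0} (h : RegEq K ν ν') (hH : HI ν') :
    RegEq K (ν + t) (ν' + (rep K (ν + t) - ν')) := by
  by_cases hle : ν + t ≤ (K : ℝ≥0)
  · have hν : ν ≤ (K : ℝ≥0) := le_trans le_self_add hle
    have hrep : ν' = rep K ν := eq_rep_of h hH hν
    have hle2 : ν' ≤ rep K (ν + t) := hrep.le.trans (rep_mono le_self_add hle)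
    rw [add_tsub_cancel_of_le hle2]
    exact rep_regEq K (ν + t)
  · right
    refine ⟨lt_of_not_ge hle, ?_⟩
    have hrep : rep K (ν + t) = (K : ℝ≥0) + 1/2 := by unfold rep; rw [if_neg hle]
    rw [hrep]
    rcases le_total ν' ((K : ℝ≥0) + 1/2) with h1 | h1
    · rw [add_tsub_cancel_of_le h1]
      exact lt_add_of_pos_right _ (by norm_num)
    · rw [tsub_eq_zero_of_le h1, add_zero]
      calc (K : ℝ≥0) < (K : ℝ≥0) + 1/2 := lt_add_of_pos_right _ (by norm_num)
        _ ≤ ν' := h1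

lemma sat_of_regEq {K : ℕ} {φ : CC} (hφ : StrictGuard K φ) (hm : φ.maxConst ≤ K)
    {x y : ℝ≥0} (h : RegEq K x y) (hx : φ.sat x) : φ.sat y := by
  rcases hφ with ⟨m, rfl⟩ | ⟨m, rfl⟩ | rfl
  · exact regEq_natval h hm hx
  · have hmK : m + 1 ≤ K := le_trans (le_max_right m (m+1)) hm
    obtain ⟨hx1, hx2⟩ := hx
    simp only [CC.sat] at hx1 hx2 ⊢
    rcases h with ⟨hfl, hfr⟩ | ⟨h1, h2⟩
    · have hx2' : x < (m : ℝ≥0) + 1 := by push_cast at hx2; exact hx2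
      have hfx : ⌊x⌋₊ = m := by
        rw [Nat.floor_eq_iff zero_le]
        exact ⟨hx1.le, hx2'⟩
      have hfrx : fracPart x ≠ 0 := by
        intro h0
        rw [fracPart_eq_zero_iff.1 h0, hfx] at hx1
        exact lt_irrefl _ hx1
      have hfry : fracPart y ≠ 0 := fun h0 => hfrx (hfr.2 h0)
      have hfy : ⌊y⌋₊ = m := by rw [← hfl]; exact hfx
      constructor
      · have := floor_lt_of_frac_ne hfry
        rwa [hfy] at this
      · have := Nat.lt_floor_add_one y
        rw [hfy] at this
        push_cast
        exact this
    · exfalso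
      have hc : ((m + 1 : ℕ) : ℝ≥0) ≤ (K : ℝ≥0) := by exact_mod_cast hmK
      exact lt_irrefl x (hx2.trans_le (hc.trans h1.le))
  · simp only [CC.sat] at hx ⊢
    rcases h with ⟨hfl, hfr⟩ | ⟨h1, h2⟩
    · have hKfx : K ≤ ⌊x⌋₊ := Nat.le_floor hx.le
      by_cases h0 : fracPart x = 0
      · have hxf : x = (⌊x⌋₊ : ℝ≥0) := fracPart_eq_zero_iff.1 h0
        rw [hxf] at hx
        have hKlt : K < ⌊x⌋₊ := by exact_mod_cast hx
        calc (K : ℝ≥0) < (⌊x⌋₊ : ℝ≥0) := by exact_mod_cast hKlt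
          _ = (⌊y⌋₊ : ℝ≥0) := by rw [hfl]
          _ ≤ y := Nat.floor_le zero_le
      · have hfry : fracPart y ≠ 0 := fun hc => h0 (hfr.2 hc)
        calc (K : ℝ≥0) ≤ (⌊x⌋₊ : ℝ≥0) := by exact_mod_cast hKfx
          _ = (⌊y⌋₊ : ℝ≥0) := by rw [hfl]
          _ < y := floor_lt_of_frac_ne hfry
    · exact h2

lemma strict_reset_iff {A : Type} {M : TA A} {K : ℕ} (hst : M.IsStrict K)
    (hmx : M.MaxConstLE K) {θ : TTrans M.Q A} (hθ : θ ∈ M.trans) {v : ℝ≥0}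
    (hv : θ.guard.sat v) :
    θ.reset = true ↔ ∃ m : ℕ, m ≤ K ∧ v = (m : ℝ≥0) := by
  obtain ⟨hsg, hiff⟩ := hst θ hθ
  constructor
  · intro hr
    obtain ⟨m, hg⟩ := hiff.2 hr
    refine ⟨m, ?_, ?_⟩
    · have := hmx θ hθ
      rw [hg] at this
      exact this
    · rw [hg] at hv
      exact hv
  · rintro ⟨m, hmK, rfl⟩
    rcases hsg with ⟨m', hg⟩ | ⟨m', hg⟩ | hg
    · exact hiff.1 ⟨m', hg⟩
    · exfalso
      rw [hg] at hv
      obtain ⟨h1, h2⟩ := hv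
      simp only [CC.sat] at h1 h2
      have h1' : m' < m := by exact_mod_cast h1
      have h2' : m < m' + 1 := by exact_mod_cast h2
      omega
    · exfalso
      rw [hg] at hv
      simp only [CC.sat] at hv
      have : K < m := by exact_mod_cast hv
      omega

lemma run_clock_eq {A : Type} {M : TA A} {K : ℕ} (hst : M.IsStrict K)
    (hmx : M.MaxConstLE K) {θ : TTrans M.Q A} (hθ : θ ∈ M.trans) {v : ℝ≥0}
    (hv : θ.guard.sat v) :
    (if θ.reset then (0 : ℝ≥0) else v) = resetStep K v := by
  by_cases h : ∃ m : ℕ, m ≤ K ∧ v = (m : ℝ≥0)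
  · have hr := (strict_reset_iff hst hmx hθ hv).2 h
    simp [resetStep, h, hr]
  · have hr : θ.reset ≠ true := fun hc => h ((strict_reset_iff hst hmx hθ hv).1 hc)
    have hr' : θ.reset = false := by revert hr; cases θ.reset <;> simp
    simp [resetStep, h, hr']

lemma steps_append_split {A : Type} {M : TA A} :
    ∀ {x y : TimedWord A} {c c'' : M.Q × ℝ≥0}, Steps M c (x ++ y) c'' →
      ∃ c', Steps M c x c' ∧ Steps M c' y c'' := by
  intro x
  induction x with
  | nil => exact fun h => ⟨_, Steps.nil _, h⟩
  | cons p x ih =>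
    intro y c c'' h
    obtain ⟨q, ν⟩ := c
    obtain ⟨t, a⟩ := p
    cases h with
    | cons θ hθ hsrc hlab hg hrest =>
      obtain ⟨c', h1, h2⟩ := ih hrest
      exact ⟨c', Steps.cons θ hθ hsrc hlab hg h1, h2⟩

lemma steps_append_comp {A : Type} {M : TA A} {x y : TimedWord A}
    {c c' c'' : M.Q × ℝ≥0} (h1 : Steps M c x c') (h2 : Steps M c' y c'') :
    Steps M c (x ++ y) c'' := by
  induction h1 with
  | nil => simpa using h2
  | cons θ hθ hsrc hlab hg hrest ih =>
    exact Steps.cons θ hθ hsrc hlab hg (ih h2)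

lemma run_clock {A : Type} {M : TA A} {K : ℕ} (hst : M.IsStrict K)
    (hmx : M.MaxConstLE K) :
    ∀ {u : TimedWord A} {q : M.Q} {ν : ℝ≥0} {c : M.Q × ℝ≥0},
      Steps M (q, ν) u c → c.2 = cKAux K ν (u.map Prod.fst) := by
  intro u
  induction u with
  | nil =>
    intro q ν c h
    cases h
    simp [cKAux]
  | cons p u ih =>
    intro q ν c h
    obtain ⟨t, a⟩ := p
    cases h with
    | cons θ hθ hsrc hlab hg hrest =>
      have h1 := run_clock_eq (K := K) hst hmx hθ hg
      have h2 := ih hrest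
      rw [h1] at h2
      simpa [cKAux] using h2

/-- The half-integral replacement word. -/
noncomputable def buildW {A : Type} (K : ℕ) : ℝ≥0 → ℝ≥0 → TimedWord A → TimedWord A
  | _, _, [] => []
  | ν, ν', (t, a) :: u =>
      ((rep K (ν + t) - ν'), a) ::
        buildW K (resetStep K (ν + t)) (resetStep K (ν' + (rep K (ν + t) - ν'))) u

lemma HI_resetStep {K : ℕ} {v : ℝ≥0} (h : HI v) : HI (resetStep K v) := by
  unfold resetStep
  split_ifs
  · exact HI_zero
  · exact h

lemma buildW_props {A : Type} (K : ℕ) :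
    ∀ (u : TimedWord A) (ν ν' : ℝ≥0), HI ν' →
      ∀ p ∈ buildW K ν ν' u, HI p.1 ∧ p.1 ≤ (K : ℝ≥0) + 1/2 := by
  intro u
  induction u with
  | nil => intro ν ν' h p hp; simp [buildW] at hp
  | cons x u ih =>
    intro ν ν' h p hp
    obtain ⟨t, a⟩ := x
    simp only [buildW, List.mem_cons] at hp
    rcases hp with rfl | hp
    · exact ⟨HI_tsub (HI_rep K _) h, le_trans tsub_le_self (rep_le K _)⟩
    · exact ih _ _ (HI_resetStep (HI_add h (HI_tsub (HI_rep K _) h))) p hp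

lemma HI_cKAux (K : ℕ) :
    ∀ (d : Timestamp) (v : ℝ≥0), HI v → (∀ t ∈ d, HI t) → HI (cKAux K v d) := by
  intro d
  induction d with
  | nil => intro v hv _; simpa [cKAux] using hv
  | cons t d ih =>
    intro v hv hd
    have : cKAux K v (t :: d) = cKAux K (resetStep K (v + t)) d := rfl
    rw [this]
    exact ih _ (HI_resetStep (HI_add hv (hd t (by simp)))) (fun s hs => hd s (by simp [hs]))

lemma key_lemma {A : Type} {M : TA A} {K : ℕ} (hst : M.IsStrict K)
    (hmx : M.MaxConstLE K) :
    ∀ (u : TimedWord A) (q : M.Q) (ν ν' : ℝ≥0) (c : M.Q × ℝ≥0),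
      Steps M (q, ν) u c → RegEq K ν ν' → HI ν' →
      ∃ ν'' : ℝ≥0, Steps M (q, ν') (buildW K ν ν' u) (c.1, ν'') := by
  intro u
  induction u with
  | nil =>
    intro q ν ν' c h _ _
    cases h
    exact ⟨ν', Steps.nil _⟩
  | cons x u ih =>
    intro q ν ν' c h hreg hH
    obtain ⟨t, a⟩ := x
    cases h with
    | cons θ hθ hsrc hlab hg hrest =>
      have hreg2 : RegEq K (ν + t) (ν' + (rep K (ν + t) - ν')) := step_key hreg hH
      have hg' : θ.guard.sat (ν' + (rep K (ν + t) - ν')) :=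
        sat_of_regEq (hst θ hθ).1 (hmx θ hθ) hreg2 hg
      have hc1 : (if θ.reset then (0 : ℝ≥0) else ν + t) = resetStep K (ν + t) :=
        run_clock_eq hst hmx hθ hg
      have hc2 : (if θ.reset then (0 : ℝ≥0) else ν' + (rep K (ν + t) - ν')) =
          resetStep K (ν' + (rep K (ν + t) - ν')) :=
        run_clock_eq hst hmx hθ hg'
      have hreg3 : RegEq K (resetStep K (ν + t))
          (resetStep K (ν' + (rep K (ν + t) - ν'))) := by
        unfold resetStep
        by_cases hmex : ∃ m : ℕ, m ≤ K ∧ ν + t = (m : ℝ≥0)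
        · have hm' : ∃ m : ℕ, m ≤ K ∧ ν' + (rep K (ν + t) - ν') = (m : ℝ≥0) := by
            obtain ⟨m, hmk, hv⟩ := hmex
            exact ⟨m, hmk, regEq_natval hreg2 hmk hv⟩
          rw [if_pos hmex, if_pos hm']
          exact regEq_refl K 0
        · have hm' : ¬ ∃ m : ℕ, m ≤ K ∧ ν' + (rep K (ν + t) - ν') = (m : ℝ≥0) := by
            rintro ⟨m, hmk, hv⟩
            exact hmex ⟨m, hmk, regEq_natval (regEq_symm hreg2) hmk hv⟩
          rw [if_neg hmex, if_neg hm']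
          exact hreg2
      have hH2 : HI (resetStep K (ν' + (rep K (ν + t) - ν'))) :=
        HI_resetStep (HI_add hH (HI_tsub (HI_rep K _) hH))
      rw [hc1] at hrest
      obtain ⟨ν'', hw⟩ := ih θ.dst (resetStep K (ν + t))
        (resetStep K (ν' + (rep K (ν + t) - ν'))) c hrest hreg3 hH2
      refine ⟨ν'', ?_⟩
      show Steps M (q, ν') (buildW K ν ν' ((t, a) :: u)) (c.1, ν'')
      simp only [buildW]
      refine Steps.cons θ hθ hsrc hlab hg' ?_
      rw [hc2]
      exact hw


/-- every timed word `u` can be replaced after a small half-integral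
prefix `u0` by a half-integral `w` with `u0w` small, reaching the same state in
every `K`-acceptor. -/
theorem statement14 {A : Type} [Finite A] (K : ℕ) (u0 : TimedWord A)
    (h0 : HalfIntegral u0) (hs : SmallWord K u0) :
    ∀ u : TimedWord A, ∃ w : TimedWord A, HalfIntegral w ∧
      HalfIntegral (u0 ++ w) ∧ SmallWord K (u0 ++ w) ∧
      ∀ B : TA A, IsKAcceptor B K → B.SameState (u0 ++ u) (u0 ++ w) := by
  intro u
  set ν0 : ℝ≥0 := cKAux K 0 (u0.map Prod.fst) with hν0
  have hHν0 : HI ν0 := by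
    apply HI_cKAux
    · exact HI_zero
    · intro t ht
      obtain ⟨p, hp, hpt⟩ := List.mem_map.1 ht
      rw [← hpt]
      exact HI_iff.2 (h0 p hp)
  have half12 : ((K : ℝ≥0) + 1/2) < (K : ℝ≥0) + 1 := add_lt_add_right half_lt_one _
  refine ⟨buildW K ν0 ν0 u, ?_, ?_, ?_, ?_⟩
  · intro p hp
    exact HI_iff.1 (buildW_props K u ν0 ν0 hHν0 p hp).1
  · intro p hp
    rcases List.mem_append.1 hp with h | h
    · exact h0 p h
    · exact HI_iff.1 (buildW_props K u ν0 ν0 hHν0 p h).1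
  · intro p hp
    rcases List.mem_append.1 hp with h | h
    · exact hs p h
    · exact lt_of_le_of_lt (buildW_props K u ν0 ν0 hHν0 p h).2 half12
  · intro B hB
    obtain ⟨hfin, hcomp, hdet, hirta, hst, hmx, hreg⟩ := hB
    obtain ⟨c, hc⟩ := hcomp (u0 ++ u)
    obtain ⟨c0, h1, h2⟩ := steps_append_split hc
    obtain ⟨q0, μ0⟩ := c0
    have hμ0 : μ0 = ν0 := by
      have h3 := run_clock (K := K) hst hmx h1
      rw [← hν0] at h3
      exact h3
    subst hμ0
    obtain ⟨ν'', hw⟩ := key_lemma hst hmx u q0 ν0 ν0 c h2 (regEq_refl K ν0) hHν0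
    obtain ⟨qf, νf⟩ := c
    exact ⟨qf, νf, ν'', hc, steps_append_comp h1 hw⟩


end IRTA
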